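/- For a unit quaternion q with q1 ≠ −1 and e = (1,0,0,0)ᵀ, the composed map v ↦ rotation-then-projection Π_q(v) = P v − (⟨e, Pv⟩/(1+⟨q,e⟩))(q+e), where P = I − qqᵀ, always outputs a vector with first coordinate zero, i.e., Π_q(v) lies in the tangent space at e. -/

import Mathlib

open RealInnerProductSpace

theorem stmt_13 {q : EuclideanSpace ℝ (Fin 4)} (hq : ‖q‖ = 1)
    (e : EuclideanSpace ℝ (Fin 4)) (he : e = EuclideanSpace.single 0 1)
    (hq1 : 1 + ⟪q, e⟫ ≠ 0)
    (P : EuclideanSpace ℝ (Fin 4) → EuclideanSpace ℝ (Fin 4))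
    (hP : ∀ v, P v = v - ⟪q, v⟫ • q)
    (Pr : EuclideanSpace ℝ (Fin 4) → EuclideanSpace ℝ (Fin 4))
    (hPr : ∀ v, Pr v = P v - (⟪e, P v⟫ / (1 + ⟪q, e⟫)) • (q + e)) :
    ∀ v, Pr v 0 = 0 := by
  intro v
  have h1 : ⟪e, P v⟫ = P v 0 := by
    rw [he, EuclideanSpace.inner_single_left]; simp
  have h2 : ⟪q, e⟫ = q 0 := by
    rw [he, EuclideanSpace.inner_single_right]; simp
  have := hq1
  rw [h2] at this
  rw [hPr, h1, h2]
  simp only [PiLp.sub_apply, PiLp.smul_apply, PiLp.add_apply, he,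
    EuclideanSpace.single_apply, smul_eq_mul]
  field_simp
  simp only [if_true, mul_one, sub_self]
  ring
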